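/- Let n ≥ 1, let H be a Hermitian n×n complex matrix and β > 0, and let ⟨·,·⟩ denote the associated Kubo–Mori–Bogoliubov form on n×n complex matrices. Let Q, Q' be n×n complex matrices and ω, ω' ∈ ℝ with ω ≠ ω', such that H·Q − Q·H = ω•Q and H·Q' − Q'·H = ω'•Q'. Then ⟨Q, Q'⟩ = 0; i.e., dynamical symmetries with distinct frequencies have vanishing KMB overlap. -/

import Mathlib

open MeasureTheory Matrix

attribute [local instance] Matrix.linftyOpNormedAddCommGroup Matrix.linftyOpNormedSpace
  Matrix.linftyOpNormedRing Matrix.linftyOpNormedAlgebra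

/-- If `A * Q = Q * B` then `exp A * Q = Q * exp B`. -/
private lemma exp_mul_rel {n : ℕ} (A B Q : Matrix (Fin n) (Fin n) ℂ)
    (h : A * Q = Q * B) : NormedSpace.exp A * Q = Q * NormedSpace.exp B := by
  have hk : ∀ k : ℕ, A ^ k * Q = Q * B ^ k := by
    intro k
    induction k with
    | zero => simp
    | succ k ih => rw [pow_succ, pow_succ, mul_assoc, h, ← mul_assoc, ih, mul_assoc]
  simp only [NormedSpace.exp_eq_tsum ℂ]
  erw [← (NormedSpace.expSeries_summable' (𝕂 := ℂ) A).tsum_mul_right Q,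
      ← (NormedSpace.expSeries_summable' (𝕂 := ℂ) B).tsum_mul_left Q]
  congr 1
  funext k
  rw [smul_mul_assoc, hk k, mul_smul_comm]

private lemma exp_smul_one {n : ℕ} (c : ℂ) :
    NormedSpace.exp (c • (1 : Matrix (Fin n) (Fin n) ℂ)) = Complex.exp c • 1 := by
  have h := NormedSpace.algebraMap_exp_comm (𝔸 := Matrix (Fin n) (Fin n) ℂ) c
  rw [Algebra.algebraMap_eq_smul_one, Algebra.algebraMap_eq_smul_one] at h
  rw [Complex.exp_eq_exp_ℂ]
  exact h.symm

/-- Moving a dynamical symmetry through an exponential picks up a scalar. -/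
private lemma exp_mul_dynSym {n : ℕ} (H Q : Matrix (Fin n) (Fin n) ℂ) (c : ℂ)
    (hQ : H * Q - Q * H = c • Q) (t : ℂ) :
    NormedSpace.exp (t • H) * Q
      = Complex.exp (t * c) • (Q * NormedSpace.exp (t • H)) := by
  have hHQ : H * Q = c • Q + Q * H := sub_eq_iff_eq_add.mp hQ
  have h : (t • H) * Q = Q * ((t * c) • 1 + t • H) := by
    rw [smul_mul_assoc, hHQ, mul_add, mul_smul_comm, mul_one, smul_add, smul_smul,
      mul_smul_comm]
  rw [exp_mul_rel _ _ _ h,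
    Matrix.exp_add_of_commute _ _ (((Commute.one_left H).smul_left (t * c)).smul_right t),
    exp_smul_one]
  rw [smul_mul_assoc, one_mul, mul_smul_comm]

/-- The Kubo–Mori–Bogoliubov form associated to a Hamiltonian `H` and inverse
temperature `β`:
`⟨A,B⟩ = (1/β)∫_{λ∈[0,β]} tr(e^{−λH} A† e^{−(β−λ)H} B) dλ / Z − conj(tr(ρA)/Z)·(tr(ρB)/Z)`,
with `ρ = e^{−βH}` and `Z = tr ρ`. -/
noncomputable def kmb {n : ℕ} (H : Matrix (Fin n) (Fin n) ℂ) (β : ℝ)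
    (A B : Matrix (Fin n) (Fin n) ℂ) : ℂ :=
  (β : ℂ)⁻¹ *
      (∫ l in Set.Icc (0 : ℝ) β,
        (NormedSpace.exp ((-l) • H) * Aᴴ * NormedSpace.exp ((-(β - l)) • H) * B).trace) /
      (NormedSpace.exp ((-β) • H)).trace -
    starRingEnd ℂ
        ((NormedSpace.exp ((-β) • H) * A).trace / (NormedSpace.exp ((-β) • H)).trace) *
      ((NormedSpace.exp ((-β) • H) * B).trace / (NormedSpace.exp ((-β) • H)).trace)

/-- **Orthogonality of dynamical symmetries with distinct frequencies**: if
`[H,Q] = ω Q` and `[H,Q'] = ω' Q'` with real `ω ≠ ω'`, then `⟨Q, Q'⟩ = 0` for the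
KMB form of the Hermitian Hamiltonian `H` at inverse temperature `β > 0`. -/
theorem kmb_orthogonal_distinct_frequencies (n : ℕ) (hn : 1 ≤ n)
    (H : Matrix (Fin n) (Fin n) ℂ) (hH : H.IsHermitian) (β : ℝ) (hβ : 0 < β)
    (Q Q' : Matrix (Fin n) (Fin n) ℂ) (ω ω' : ℝ) (hωω' : ω ≠ ω')
    (hQ : H * Q - Q * H = (ω : ℂ) • Q) (hQ' : H * Q' - Q' * H = (ω' : ℂ) • Q') :
    kmb H β Q Q' = 0 := by
  have hsmul : ∀ r : ℝ, r • H = (r : ℂ) • H := fun r => (algebraMap_smul ℂ r H).symm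
  -- the commutation relation for Qᴴ
  have hQd : H * Qᴴ - Qᴴ * H = ((-ω : ℝ) : ℂ) • Qᴴ := by
    have := congrArg conjTranspose hQ
    simp only [conjTranspose_sub, conjTranspose_mul, hH.eq, conjTranspose_smul,
      Complex.star_def, Complex.conj_ofReal] at this
    push_cast
    rw [neg_smul, ← this]
    abel
  -- basic exponential manipulation lemmas
  have hE : ∀ s t : ℝ, NormedSpace.exp ((s : ℂ) • H) * NormedSpace.exp ((t : ℂ) • H)
      = NormedSpace.exp (((s + t : ℝ) : ℂ) • H) := by
    intro s t
    rw [← Matrix.exp_add_of_commute _ _ (((Commute.refl H).smul_left (s : ℂ)).smul_right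
      (t : ℂ)), ← add_smul]
    push_cast
    ring_nf
  have hmoveQ' : ∀ t : ℝ, NormedSpace.exp ((t : ℂ) • H) * Q'
      = Complex.exp (t * ω') • (Q' * NormedSpace.exp ((t : ℂ) • H)) := by
    intro t
    have := exp_mul_dynSym H Q' (ω' : ℂ) hQ' (t : ℂ)
    rw [this]
  have hmoveQd : ∀ t : ℝ, NormedSpace.exp ((t : ℂ) • H) * Qᴴ
      = Complex.exp (t * (-ω)) • (Qᴴ * NormedSpace.exp ((t : ℂ) • H)) := by
    intro t
    have := exp_mul_dynSym H Qᴴ ((-ω : ℝ) : ℂ) hQd (t : ℂ)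
    rw [this]
    norm_cast
  have hmoveQ : ∀ t : ℝ, NormedSpace.exp ((t : ℂ) • H) * Q
      = Complex.exp (t * ω) • (Q * NormedSpace.exp ((t : ℂ) • H)) := by
    intro t
    have := exp_mul_dynSym H Q (ω : ℂ) hQ (t : ℂ)
    rw [this]
  set c0 : ℂ := (NormedSpace.exp (((-β : ℝ) : ℂ) • H) * (Qᴴ * Q')).trace with hc0def
  -- first way to compute the integrand
  have claim1 : ∀ l : ℝ,
      (NormedSpace.exp (((-l : ℝ) : ℂ) • H) * Qᴴ
        * NormedSpace.exp (((-(β - l) : ℝ) : ℂ) • H) * Q').trace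
      = Complex.exp ((-(β - l)) * ω') * c0 := by
    intro l
    rw [mul_assoc, mul_assoc, hmoveQ' (-(β - l)), mul_smul_comm, mul_smul_comm, trace_smul,
      ← mul_assoc, ← mul_assoc, trace_mul_comm, smul_eq_mul, hc0def]
    congr 1
    · congr 1
      push_cast
      ring
    · have hre : NormedSpace.exp (((-(β - l) : ℝ) : ℂ) • H)
          * (NormedSpace.exp (((-l : ℝ) : ℂ) • H) * Qᴴ) * Q'
          = NormedSpace.exp (((-β : ℝ) : ℂ) • H) * (Qᴴ * Q') := by
        rw [← mul_assoc (NormedSpace.exp (((-(β - l) : ℝ) : ℂ) • H)), hE (-(β - l)) (-l),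
          show (-(β - l)) + (-l) = -β by ring, mul_assoc]
      rw [← mul_assoc, hre]
  -- second way, at l = β
  have claim2 :
      (NormedSpace.exp (((-β : ℝ) : ℂ) • H) * Qᴴ
        * NormedSpace.exp (((-(β - β) : ℝ) : ℂ) • H) * Q').trace
      = Complex.exp ((β : ℂ) * (ω - ω')) * c0 := by
    have h0 : NormedSpace.exp (((-(β - β) : ℝ) : ℂ) • H) = 1 := by
      norm_num
    rw [h0, mul_one, hmoveQd (-β), smul_mul_assoc, trace_smul, mul_assoc, hmoveQ' (-β),
      mul_smul_comm, trace_smul, smul_eq_mul, smul_eq_mul, ← mul_assoc, ← Complex.exp_add,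
      ← mul_assoc, trace_mul_comm, ← hc0def]
    congr 2
    push_cast
    ring
  have hc0 : c0 = 0 := by
    have h1 := claim1 β
    rw [claim2] at h1
    have : (Complex.exp ((β : ℂ) * (ω - ω')) - Complex.exp ((-(β - β)) * ω')) * c0 = 0 := by
      rw [sub_mul, h1, sub_self]
    rcases mul_eq_zero.mp this with h | h
    · exfalso
      apply hωω'
      have hb : ((-(β - β)) * ω' : ℂ) = ((0 : ℝ) : ℂ) := by push_cast; ring
      have ha : ((β : ℂ) * (ω - ω')) = ((β * (ω - ω') : ℝ) : ℂ) := by push_cast; ring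
      rw [sub_eq_zero, hb, ha, ← Complex.ofReal_exp, ← Complex.ofReal_exp] at h
      have hinj : β * (ω - ω') = 0 := Real.exp_injective (by exact_mod_cast h)
      rcases mul_eq_zero.mp hinj with h' | h'
      · exact absurd h' (ne_of_gt hβ)
      · linarith [sub_eq_zero.mp h']
    · exact h
  -- vanishing of the one-point functions
  have hone : ∀ (R : Matrix (Fin n) (Fin n) ℂ) (μ : ℝ), μ ≠ 0 →
      (H * R - R * H = (μ : ℂ) • R) →
      (NormedSpace.exp (((-β : ℝ) : ℂ) • H) * R).trace = 0 := by
    intro R μ hμ hR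
    have hmove := exp_mul_dynSym H R (μ : ℂ) hR ((-β : ℝ) : ℂ)
    have h1 : (NormedSpace.exp (((-β : ℝ) : ℂ) • H) * R).trace
        = Complex.exp (((-β : ℝ) : ℂ) * μ) * (NormedSpace.exp (((-β : ℝ) : ℂ) • H) * R).trace := by
      nth_rewrite 1 [hmove]
      rw [trace_smul, smul_eq_mul, trace_mul_comm]
    have h2 : (1 - Complex.exp (((-β : ℝ) : ℂ) * μ))
        * (NormedSpace.exp (((-β : ℝ) : ℂ) • H) * R).trace = 0 := by
      rw [sub_mul, one_mul]
      nth_rewrite 1 [h1]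
      ring
    rcases mul_eq_zero.mp h2 with h | h
    · exfalso
      have ha : (((-β : ℝ) : ℂ) * μ) = ((-β * μ : ℝ) : ℂ) := by push_cast; ring
      rw [sub_eq_zero, ha, ← Complex.ofReal_one, ← Complex.ofReal_exp] at h
      have := Real.exp_injective (((Real.exp_zero).symm ▸ (by exact_mod_cast h.symm :
        Real.exp (-β * μ) = 1)) : Real.exp (-β * μ) = Real.exp 0)
      have : -β * μ = 0 := this
      rcases mul_eq_zero.mp this with h' | h'
      · exact absurd (neg_eq_zero.mp h') (ne_of_gt hβ)
      · exact hμ h'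
    · exact h
  -- put everything together
  unfold kmb
  simp only [hsmul]
  have hint : (∫ l in Set.Icc (0 : ℝ) β,
      (NormedSpace.exp (((-l : ℝ) : ℂ) • H) * Qᴴ
        * NormedSpace.exp (((-(β - l) : ℝ) : ℂ) • H) * Q').trace) = 0 := by
    simp only [claim1, hc0, mul_zero, integral_zero]
  rw [hint]
  rcases eq_or_ne ω 0 with hω | hω
  · have hω' : ω' ≠ 0 := fun h => hωω' (by rw [hω, h])
    rw [hone Q' ω' hω' hQ']
    simp
  · rw [hone Q ω hω hQ]
    simp
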